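/- Let G be a (P6, diamond)-free graph containing an induced 5-cycle v1v2v3v4v5. If the set A_i (vertices outside the cycle adjacent only to v_i) contains an edge, then A_{i+2}, A_{i+3}, B_{i+1,i+2}, and B_{i-1,i-2} are all empty, where B_{j,j+1} is the set of vertices adjacent exactly to v_j and v_{j+1} on the cycle (indices mod 5). -/

import Mathlib

open SimpleGraph

def diamond : SimpleGraph (Fin 4) := (⊤ : SimpleGraph (Fin 4)).deleteEdges {s(0, 1)}

set_option maxHeartbeats 1000000 in
lemma core {V : Type*} (G : SimpleGraph V)
    (hP6 : ¬ Nonempty (pathGraph 6 ↪g G))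
    (hD : ¬ Nonempty (diamond ↪g G))
    (v : Fin 5 → V) (hv : Function.Injective v)
    (hC5 : ∀ i j, G.Adj (v i) (v j) ↔ j = i + 1 ∨ i = j + 1)
    (a₁ a₂ : V) (ha₁r : a₁ ∉ Set.range v) (ha₂r : a₂ ∉ Set.range v)
    (ha₁ : ∀ j, G.Adj a₁ (v j) ↔ j = 0) (ha₂ : ∀ j, G.Adj a₂ (v j) ↔ j = 0)
    (haa : G.Adj a₁ a₂)
    (x : V) (hxr : x ∉ Set.range v)
    (hx2 : G.Adj x (v 2)) (hx0 : ¬ G.Adj x (v 0)) (hx3 : ¬ G.Adj x (v 3))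
    (hx4 : ¬ G.Adj x (v 4)) : False := by
  obtain ⟨a, har, haadj, hax⟩ :
      ∃ a, a ∉ Set.range v ∧ (∀ j, G.Adj a (v j) ↔ j = 0) ∧ ¬ G.Adj a x := by
    by_cases h1 : G.Adj a₁ x
    · by_cases h2 : G.Adj a₂ x
      · exfalso
        apply hD
        have hne1 : ¬ v 0 = x := fun h => hxr ⟨0, h⟩
        have hne2 : ¬ v 0 = a₁ := fun h => ha₁r ⟨0, h⟩
        have hne3 : ¬ v 0 = a₂ := fun h => ha₂r ⟨0, h⟩
        have hne4 : ¬ x = a₁ := fun h => G.irrefl (h ▸ h1)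
        have hne5 : ¬ x = a₂ := fun h => G.irrefl (h ▸ h2)
        have hne6 : ¬ a₁ = a₂ := G.ne_of_adj haa
        have e1 : ¬ G.Adj (v 0) x := fun h => hx0 h.symm
        have e2 : G.Adj (v 0) a₁ := ((ha₁ 0).mpr rfl).symm
        have e3 : G.Adj (v 0) a₂ := ((ha₂ 0).mpr rfl).symm
        have e4 : G.Adj x a₁ := h1.symm
        have e5 : G.Adj x a₂ := h2.symm
        refine ⟨⟨⟨fun p => match p with
          | ⟨0,_⟩ => v 0 | ⟨1,_⟩ => x | ⟨2,_⟩ => a₁ | ⟨3,_⟩ => a₂, ?_⟩, ?_⟩⟩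
        · intro p q h
          fin_cases p <;> fin_cases q <;>
            first
            | rfl
            | exact absurd h hne1 | exact absurd h.symm hne1
            | exact absurd h hne2 | exact absurd h.symm hne2
            | exact absurd h hne3 | exact absurd h.symm hne3
            | exact absurd h hne4 | exact absurd h.symm hne4
            | exact absurd h hne5 | exact absurd h.symm hne5
            | exact absurd h hne6 | exact absurd h.symm hne6
        · intro p q
          fin_cases p <;> fin_cases q <;>
            first
            | exact iff_of_true (by first
                | exact e2 | exact e2.symm | exact e3 | exact e3.symm
                | exact e4 | exact e4.symm | exact e5 | exact e5.symm
                | exact haa | exact haa.symm)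
                (by simp [diamond, SimpleGraph.deleteEdges_adj, Sym2.eq_iff])
            | exact iff_of_false (by first
                | exact G.irrefl | exact e1 | exact fun h => e1 h.symm)
                (by simp [diamond, SimpleGraph.deleteEdges_adj, Sym2.eq_iff])
      · exact ⟨a₂, ha₂r, ha₂, h2⟩
    · exact ⟨a₁, ha₁r, ha₁, h1⟩
  apply hP6
  have n1 : ∀ k, ¬ a = v k := fun k h => har ⟨k, h.symm⟩
  have n2 : ∀ k, ¬ x = v k := fun k h => hxr ⟨k, h.symm⟩
  have n3 : ¬ a = x := by
    intro h; subst h; exact (by decide : (2:Fin 5) ≠ 0) ((haadj 2).mp hx2)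
  have n4 : ∀ (k l : Fin 5), ¬ k = l → ¬ v k = v l := fun k l h => hv.ne h
  have e1 : G.Adj a (v 0) := (haadj 0).mpr rfl
  have e2 : ¬ G.Adj a (v 4) := fun h => (by decide : (4:Fin 5) ≠ 0) ((haadj 4).mp h)
  have e3 : ¬ G.Adj a (v 3) := fun h => (by decide : (3:Fin 5) ≠ 0) ((haadj 3).mp h)
  have e4 : ¬ G.Adj a (v 2) := fun h => (by decide : (2:Fin 5) ≠ 0) ((haadj 2).mp h)
  have e5 : G.Adj (v 0) (v 4) := (hC5 0 4).mpr (by decide)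
  have e6 : ¬ G.Adj (v 0) (v 3) := fun h => by
    have := (hC5 0 3).mp h; revert this; decide
  have e7 : ¬ G.Adj (v 0) (v 2) := fun h => by
    have := (hC5 0 2).mp h; revert this; decide
  have e8 : G.Adj (v 4) (v 3) := (hC5 4 3).mpr (by decide)
  have e9 : ¬ G.Adj (v 4) (v 2) := fun h => by
    have := (hC5 4 2).mp h; revert this; decide
  have e10 : G.Adj (v 3) (v 2) := (hC5 3 2).mpr (by decide)
  refine ⟨⟨⟨fun p => match p with
    | ⟨0,_⟩ => a | ⟨1,_⟩ => v 0 | ⟨2,_⟩ => v 4 | ⟨3,_⟩ => v 3 | ⟨4,_⟩ => v 2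
    | ⟨5,_⟩ => x, ?_⟩, ?_⟩⟩
  · intro p q h
    fin_cases p <;> fin_cases q <;>
      first
      | rfl
      | exact absurd h (n1 _) | exact absurd h.symm (n1 _)
      | exact absurd h (n2 _) | exact absurd h.symm (n2 _)
      | exact absurd h n3 | exact absurd h.symm n3
      | exact absurd h (n4 _ _ (by decide))
  · intro p q
    fin_cases p <;> fin_cases q <;>
      first
      | exact iff_of_true (by first
          | exact e1 | exact e1.symm | exact e5 | exact e5.symm
          | exact e8 | exact e8.symm | exact e10 | exact e10.symm
          | exact hx2 | exact hx2.symm)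
          (by simp [pathGraph_adj] <;> decide)
      | exact iff_of_false (by first
          | exact G.irrefl
          | exact e2 | exact fun h => e2 h.symm
          | exact e3 | exact fun h => e3 h.symm
          | exact e4 | exact fun h => e4 h.symm
          | exact e6 | exact fun h => e6 h.symm
          | exact e7 | exact fun h => e7 h.symm
          | exact e9 | exact fun h => e9 h.symm
          | exact hax | exact fun h => hax h.symm
          | exact hx0 | exact fun h => hx0 h.symm
          | exact hx3 | exact fun h => hx3 h.symm
          | exact hx4 | exact fun h => hx4 h.symm)
          (by simp [pathGraph_adj] <;> decide)

theorem stmt_16 {V : Type*} (G : SimpleGraph V)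
    (hP6 : ¬ Nonempty (pathGraph 6 ↪g G))
    (hD : ¬ Nonempty (diamond ↪g G))
    (v : Fin 5 → V) (hv : Function.Injective v)
    (hC5 : ∀ i j, G.Adj (v i) (v j) ↔ j = i + 1 ∨ i = j + 1)
    (A : Fin 5 → Set V)
    (hA : ∀ i, A i = {u | u ∉ Set.range v ∧ ∀ j, G.Adj u (v j) ↔ j = i})
    (B : Fin 5 → Set V)
    (hB : ∀ i, B i = {u | u ∉ Set.range v ∧ ∀ j, G.Adj u (v j) ↔ (j = i ∨ j = i + 1)}) :
    ∀ i, (∃ a₁ ∈ A i, ∃ a₂ ∈ A i, G.Adj a₁ a₂) →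
      A (i + 2) = ∅ ∧ A (i + 3) = ∅ ∧ B (i + 1) = ∅ ∧ B (i - 2) = ∅ := by
  intro i ⟨a₁, ha₁m, a₂, ha₂m, haa⟩
  rw [hA] at ha₁m ha₂m
  obtain ⟨ha₁r, ha₁adj⟩ := ha₁m
  obtain ⟨ha₂r, ha₂adj⟩ := ha₂m
  have kinj : ∀ (i j k : Fin 5), i + j = i + k → j = k := by decide
  have kinj' : ∀ (i j k : Fin 5), i - j = i - k → j = k := by decide
  have kC5 : ∀ (i j k : Fin 5),
      (i + k = i + j + 1 ∨ i + j = i + k + 1) ↔ (k = j + 1 ∨ j = k + 1) := by decide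
  have kC5' : ∀ (i j k : Fin 5),
      (i - k = i - j + 1 ∨ i - j = i - k + 1) ↔ (k = j + 1 ∨ j = k + 1) := by decide
  have ka : ∀ (i j : Fin 5), i + j = i ↔ j = 0 := by decide
  have ka' : ∀ (i j : Fin 5), i - j = i ↔ j = 0 := by decide
  have hp_inj : Function.Injective (fun j => v (i + j)) :=
    fun j k h => kinj i j k (hv h)
  have hq_inj : Function.Injective (fun j => v (i - j)) :=
    fun j k h => kinj' i j k (hv h)
  have hpC5 : ∀ j k, G.Adj (v (i + j)) (v (i + k)) ↔ k = j + 1 ∨ j = k + 1 := by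
    intro j k; rw [hC5]; exact kC5 i j k
  have hqC5 : ∀ j k, G.Adj (v (i - j)) (v (i - k)) ↔ k = j + 1 ∨ j = k + 1 := by
    intro j k; rw [hC5]; exact kC5' i j k
  have hp_range : ∀ u : V, u ∉ Set.range v → u ∉ Set.range (fun j => v (i + j)) :=
    fun u hu ⟨k, h⟩ => hu ⟨i + k, h⟩
  have hq_range : ∀ u : V, u ∉ Set.range v → u ∉ Set.range (fun j => v (i - j)) :=
    fun u hu ⟨k, h⟩ => hu ⟨i - k, h⟩
  have ha₁p : ∀ j, G.Adj a₁ (v (i + j)) ↔ j = 0 := by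
    intro j; rw [ha₁adj]; exact ka i j
  have ha₂p : ∀ j, G.Adj a₂ (v (i + j)) ↔ j = 0 := by
    intro j; rw [ha₂adj]; exact ka i j
  have ha₁q : ∀ j, G.Adj a₁ (v (i - j)) ↔ j = 0 := by
    intro j; rw [ha₁adj]; exact ka' i j
  have ha₂q : ∀ j, G.Adj a₂ (v (i - j)) ↔ j = 0 := by
    intro j; rw [ha₂adj]; exact ka' i j
  refine ⟨?_, ?_, ?_, ?_⟩
  · rw [hA, Set.eq_empty_iff_forall_notMem]
    rintro x ⟨hxr, hxadj⟩
    exact core G hP6 hD _ hp_inj hpC5 a₁ a₂ (hp_range _ ha₁r) (hp_range _ ha₂r)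
      ha₁p ha₂p haa x (hp_range _ hxr)
      ((hxadj (i + 2)).mpr rfl)
      (fun h => absurd ((hxadj (i + 0)).mp h)
        ((by decide : ∀ i : Fin 5, ¬ (i + 0 = i + 2)) i))
      (fun h => absurd ((hxadj (i + 3)).mp h)
        ((by decide : ∀ i : Fin 5, ¬ (i + 3 = i + 2)) i))
      (fun h => absurd ((hxadj (i + 4)).mp h)
        ((by decide : ∀ i : Fin 5, ¬ (i + 4 = i + 2)) i))
  · rw [hA, Set.eq_empty_iff_forall_notMem]
    rintro x ⟨hxr, hxadj⟩
    exact core G hP6 hD _ hq_inj hqC5 a₁ a₂ (hq_range _ ha₁r) (hq_range _ ha₂r)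
      ha₁q ha₂q haa x (hq_range _ hxr)
      ((hxadj (i - 2)).mpr ((by decide : ∀ i : Fin 5, i - 2 = i + 3) i))
      (fun h => absurd ((hxadj (i - 0)).mp h)
        ((by decide : ∀ i : Fin 5, ¬ (i - 0 = i + 3)) i))
      (fun h => absurd ((hxadj (i - 3)).mp h)
        ((by decide : ∀ i : Fin 5, ¬ (i - 3 = i + 3)) i))
      (fun h => absurd ((hxadj (i - 4)).mp h)
        ((by decide : ∀ i : Fin 5, ¬ (i - 4 = i + 3)) i))
  · rw [hB, Set.eq_empty_iff_forall_notMem]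
    rintro x ⟨hxr, hxadj⟩
    exact core G hP6 hD _ hp_inj hpC5 a₁ a₂ (hp_range _ ha₁r) (hp_range _ ha₂r)
      ha₁p ha₂p haa x (hp_range _ hxr)
      ((hxadj (i + 2)).mpr (Or.inr ((by decide : ∀ i : Fin 5, i + 2 = i + 1 + 1) i)))
      (fun h => absurd ((hxadj (i + 0)).mp h)
        ((by decide : ∀ i : Fin 5, ¬ (i + 0 = i + 1 ∨ i + 0 = i + 1 + 1)) i))
      (fun h => absurd ((hxadj (i + 3)).mp h)
        ((by decide : ∀ i : Fin 5, ¬ (i + 3 = i + 1 ∨ i + 3 = i + 1 + 1)) i))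
      (fun h => absurd ((hxadj (i + 4)).mp h)
        ((by decide : ∀ i : Fin 5, ¬ (i + 4 = i + 1 ∨ i + 4 = i + 1 + 1)) i))
  · rw [hB, Set.eq_empty_iff_forall_notMem]
    rintro x ⟨hxr, hxadj⟩
    exact core G hP6 hD _ hq_inj hqC5 a₁ a₂ (hq_range _ ha₁r) (hq_range _ ha₂r)
      ha₁q ha₂q haa x (hq_range _ hxr)
      ((hxadj (i - 2)).mpr (Or.inl rfl))
      (fun h => absurd ((hxadj (i - 0)).mp h)
        ((by decide : ∀ i : Fin 5, ¬ (i - 0 = i - 2 ∨ i - 0 = i - 2 + 1)) i))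
      (fun h => absurd ((hxadj (i - 3)).mp h)
        ((by decide : ∀ i : Fin 5, ¬ (i - 3 = i - 2 ∨ i - 3 = i - 2 + 1)) i))
      (fun h => absurd ((hxadj (i - 4)).mp h)
        ((by decide : ∀ i : Fin 5, ¬ (i - 4 = i - 2 ∨ i - 4 = i - 2 + 1)) i))
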